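/- In a directed graph, any vertex can be the exit of at most one superbubble: if (s₁, t) and (s₂, t) are both entrance/exit pairs of superbubbles, then s₁ = s₂. -/

import Mathlib

/-- The vertex set of the (potential) superbubble with entrance `s` and exit `t`:
vertices reachable from `s` without leaving through `t`. -/
def bubbleSet {V : Type*} (Adj : V → V → Prop) (s t : V) : Set V :=
  {v | Relation.ReflTransGen (fun u w => Adj u w ∧ u ≠ t) s v}

/-- The pair `(s,t)` satisfies the reachability, matching and acyclicity conditions. -/
def SBCore {V : Type*} (Adj : V → V → Prop) (s t : V) : Prop :=
  s ≠ t ∧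
  -- reachability: `t` is reachable from `s`
  Relation.ReflTransGen Adj s t ∧
  -- matching: vertices reachable from `s` without passing through `t` are exactly
  -- the vertices from which `t` is reachable without passing through `s`
  bubbleSet Adj s t = {v | Relation.ReflTransGen (fun u w => Adj u w ∧ w ≠ s) v t} ∧
  -- acyclicity: the subgraph induced by `bubbleSet Adj s t` is acyclic
  ¬ ∃ v ∈ bubbleSet Adj s t,
      Relation.TransGen
        (fun u w => Adj u w ∧ u ∈ bubbleSet Adj s t ∧ w ∈ bubbleSet Adj s t) v v

/-- `(s,t)` is the entrance/exit pair of a superbubble: it satisfies reachability,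
matching, acyclicity and minimality. -/
def IsEntranceExit {V : Type*} (Adj : V → V → Prop) (s t : V) : Prop :=
  SBCore Adj s t ∧
  -- minimality
  ¬ ∃ t' ∈ bubbleSet Adj s t, t' ≠ t ∧ t' ≠ s ∧ SBCore Adj s t'

theorem Relation.ReflTransGen.monoP {V : Type*} {r p : V → V → Prop} {a b : V}
    (f : ∀ a b, r a b → p a b) (h : Relation.ReflTransGen r a b) :
    Relation.ReflTransGen p a b :=
  Relation.ReflTransGen.mono f _ _ h

theorem Relation.TransGen.monoP {V : Type*} {r p : V → V → Prop} {a b : V}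
    (f : ∀ a b, r a b → p a b) (h : Relation.TransGen r a b) :
    Relation.TransGen p a b :=
  Relation.TransGen.mono f _ _ h

namespace SBAux

variable {V : Type*}

open Relation

/-- A path whose edges all have source `≠ x`, starting at `x`, is trivial. -/
lemma src_blocked {r : V → V → Prop} {x b : V}
    (h : ReflTransGen (fun u w => r u w ∧ u ≠ x) x b) : b = x := by
  rcases h.cases_head with heq | ⟨c, ⟨_, hxx⟩, _⟩
  · exact heq.symm
  · exact absurd rfl hxx

/-- A path whose edges all have target `≠ x`, ending at `x`, is trivial. -/
lemma tgt_blocked {r : V → V → Prop} {x a : V}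
    (h : ReflTransGen (fun u w => r u w ∧ w ≠ x) a x) : a = x := by
  rcases h.cases_tail with heq | ⟨c, _, ⟨_, hxx⟩⟩
  · exact heq.symm
  · exact absurd rfl hxx

/-- If all sources avoid `x` and the endpoint is not `x`, all targets avoid `x`. -/
lemma src_to_tgt {r : V → V → Prop} {x a b : V}
    (h : ReflTransGen (fun u w => r u w ∧ u ≠ x) a b) :
    b ≠ x → ReflTransGen (fun u w => r u w ∧ w ≠ x) a b := by
  induction h with
  | refl => exact fun _ => .refl
  | tail h₁ h₂ ih => exact fun hb => (ih h₂.2).tail ⟨h₂.1, hb⟩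

/-- If all targets avoid `x` and the start is not `x`, all sources avoid `x`. -/
lemma tgt_to_src {r : V → V → Prop} {x a b : V}
    (h : ReflTransGen (fun u w => r u w ∧ w ≠ x) a b) :
    a ≠ x → ReflTransGen (fun u w => r u w ∧ u ≠ x) a b := by
  induction h using ReflTransGen.head_induction_on with
  | refl => exact fun _ => .refl
  | head h₁ h₂ ih => exact fun ha => .head ⟨h₁.1, ha⟩ (ih h₁.2)

/-- First-hit decomposition: either the path never enters `x`, or it starts at
`x`, or there is an initial segment reaching `x` without passing `x` before. -/
lemma firstHit {r : V → V → Prop} (x : V) {a b : V} (h : ReflTransGen r a b) :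
    ReflTransGen (fun u w => r u w ∧ w ≠ x) a b ∨ a = x ∨
      ReflTransGen (fun u w => r u w ∧ u ≠ x) a x := by
  induction h using ReflTransGen.head_induction_on with
  | refl => exact Or.inl .refl
  | @head u c h₁ h₂ ih =>
    by_cases hux : u = x
    · exact Or.inr (Or.inl hux)
    · by_cases hcx : c = x
      · subst hcx
        exact Or.inr (Or.inr (ReflTransGen.single ⟨h₁, hux⟩))
      · rcases ih with h' | h' | h'
        · exact Or.inl (.head ⟨h₁, hcx⟩ h')
        · exact absurd h' hcx
        · exact Or.inr (Or.inr (.head ⟨h₁, hux⟩ h'))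

/-- Either the path never enters `x`, or there is a suffix from `x`. -/
lemma suffixFrom {r : V → V → Prop} (x : V) {a b : V} (h : ReflTransGen r a b) :
    ReflTransGen (fun u w => r u w ∧ w ≠ x) a b ∨ ReflTransGen r x b := by
  induction h using ReflTransGen.head_induction_on with
  | refl => exact Or.inl .refl
  | @head u c h₁ h₂ ih =>
    by_cases hcx : c = x
    · exact Or.inr (hcx ▸ h₂)
    · rcases ih with h' | h'
      · exact Or.inl (.head ⟨h₁, hcx⟩ h')
      · exact Or.inr h'

/-- A path through a forward-closed set stays in the set. -/
lemma rtg_inSet {r : V → V → Prop} {S : Set V}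
    (hS : ∀ u w, u ∈ S → r u w → w ∈ S) :
    ∀ {a b : V}, ReflTransGen r a b → a ∈ S →
      ReflTransGen (fun u w => r u w ∧ u ∈ S ∧ w ∈ S) a b := by
  intro a b h
  induction h using ReflTransGen.head_induction_on with
  | refl => exact fun _ => .refl
  | @head u c h₁ h₂ ih =>
    exact fun hu => .head ⟨h₁, hu, hS _ _ hu h₁⟩ (ih (hS _ _ hu h₁))

lemma tg_of_rtg_ne {r : V → V → Prop} {a b : V}
    (h : ReflTransGen r a b) (hne : a ≠ b) : TransGen r a b := by
  rcases h.cases_head with heq | ⟨c, h₁, h₂⟩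
  · exact absurd heq hne
  · exact TransGen.head' h₁ h₂

/-- No vertex `x ≠ s` of the bubble of `(s,t)` has a return path to `s` that
avoids leaving through `t` (this would give a cycle inside the bubble). -/
lemma noSwap (Adj : V → V → Prop) (s t x : V)
    (hx : x ∈ bubbleSet Adj s t)
    (hback : ReflTransGen (fun u w => Adj u w ∧ u ≠ t) x s)
    (hxs : x ≠ s)
    (hacyc : ¬ ∃ v ∈ bubbleSet Adj s t,
        TransGen (fun u w => Adj u w ∧ u ∈ bubbleSet Adj s t ∧ w ∈ bubbleSet Adj s t) v v) :
    False := by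
  have hS : ∀ u w, u ∈ bubbleSet Adj s t → (Adj u w ∧ u ≠ t) → w ∈ bubbleSet Adj s t :=
    fun u w hu h => ReflTransGen.tail hu h
  have h1 : ReflTransGen (fun u w => (Adj u w ∧ u ≠ t) ∧
      u ∈ bubbleSet Adj s t ∧ w ∈ bubbleSet Adj s t) s x :=
    rtg_inSet hS hx ReflTransGen.refl
  have h2 : ReflTransGen (fun u w => (Adj u w ∧ u ≠ t) ∧
      u ∈ bubbleSet Adj s t ∧ w ∈ bubbleSet Adj s t) x s :=
    rtg_inSet hS hback hx
  have h1' := h1.monoP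
    (fun a b h => (⟨h.1.1, h.2.1, h.2.2⟩ :
      Adj a b ∧ a ∈ bubbleSet Adj s t ∧ b ∈ bubbleSet Adj s t))
  have h2' := h2.monoP
    (fun a b h => (⟨h.1.1, h.2.1, h.2.2⟩ :
      Adj a b ∧ a ∈ bubbleSet Adj s t ∧ b ∈ bubbleSet Adj s t))
  rcases h1'.cases_head with heq | ⟨c, e, hcx⟩
  · exact hxs heq.symm
  · exact hacyc ⟨s, ReflTransGen.refl, TransGen.head' e (hcx.trans h2')⟩

/-- Key lemma: if `(s₁,t)` satisfies the core conditions, `(s₂,t)` is an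
entrance/exit pair, `s₁ ≠ s₂`, `s₁` lies in the bubble of `(s₂,t)` but `s₂`
does not lie in the bubble of `(s₁,t)`, we get a contradiction with the
minimality of `(s₂,t)` (via the inner pair `(s₂,s₁)`). -/
lemma keyLemma (Adj : V → V → Prop) (s₁ s₂ t : V)
    (h1 : SBCore Adj s₁ t) (h2 : IsEntranceExit Adj s₂ t)
    (hne : s₁ ≠ s₂)
    (hmem : s₁ ∈ bubbleSet Adj s₂ t)
    (hnot : s₂ ∉ bubbleSet Adj s₁ t) : False := by
  obtain ⟨hs₁t, _, hmatch₁, _⟩ := h1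
  obtain ⟨⟨hs₂t, hreach₂, hmatch₂, hacyc₂⟩, hmin₂⟩ := h2
  have m1 : ∀ v, v ∈ bubbleSet Adj s₁ t ↔
      ReflTransGen (fun u w => Adj u w ∧ w ≠ s₁) v t :=
    fun v => Set.ext_iff.mp hmatch₁ v
  have m2 : ∀ v, v ∈ bubbleSet Adj s₂ t ↔
      ReflTransGen (fun u w => Adj u w ∧ w ≠ s₂) v t :=
    fun v => Set.ext_iff.mp hmatch₂ v
  have hnotU1 : ¬ ReflTransGen (fun u w => Adj u w ∧ w ≠ s₁) s₂ t :=
    fun h => hnot ((m1 s₂).mpr h)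
  -- Strengthened paths inside the candidate bubble `(s₂, s₁)`.
  have sA : ∀ v, v ≠ s₁ →
      ReflTransGen (fun u w => Adj u w ∧ u ≠ s₁) s₂ v →
      ReflTransGen (fun u w => Adj u w ∧ u ≠ s₁ ∧ u ≠ t) s₂ v := by
    intro v hv hP
    rcases firstHit t hP with h | h | h
    · have h' := tgt_to_src (x := t) h hs₂t
      exact h'.monoP (fun a b hh => ⟨hh.1.1, hh.1.2, hh.2⟩)
    · exact absurd h hs₂t
    · exfalso
      have h' : ReflTransGen (fun u w => (Adj u w ∧ u ≠ t) ∧ u ≠ s₁) s₂ t :=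
        h.monoP (fun a b hh => ⟨⟨hh.1.1, hh.2⟩, hh.1.2⟩)
      have h'' := src_to_tgt (x := s₁) h' (Ne.symm hs₁t)
      exact hnotU1 (h''.monoP (fun a b hh => ⟨hh.1.1, hh.2⟩))
  have sub : bubbleSet Adj s₂ s₁ ⊆ bubbleSet Adj s₂ t := by
    intro v hv
    by_cases hvs : v = s₁
    · exact hvs ▸ hmem
    · exact (sA v hvs hv).monoP (fun a b h => ⟨h.1, h.2.2⟩)
  -- matching for the pair (s₂, s₁)
  have hQs₁ : ReflTransGen (fun u w => Adj u w ∧ w ≠ s₂) s₁ t := (m2 s₁).mp hmem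
  have p2' : ∀ {a : V}, ReflTransGen (fun u w => Adj u w ∧ w ≠ s₂) a s₁ →
      ReflTransGen (fun u w => Adj u w ∧
        u ∈ bubbleSet Adj s₂ t ∧ w ∈ bubbleSet Adj s₂ t) a s₁ := by
    intro a hR
    induction hR using ReflTransGen.head_induction_on with
    | refl => exact .refl
    | @head u c h₁ h₂ ih =>
      have hcU : c ∈ bubbleSet Adj s₂ t := (m2 c).mpr (h₂.trans hQs₁)
      have huU : u ∈ bubbleSet Adj s₂ t :=
        (m2 u).mpr ((ReflTransGen.head (r := fun u w => Adj u w ∧ w ≠ s₂) h₁ h₂).trans hQs₁)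
      exact .head ⟨h₁.1, huU, hcU⟩ ih
  have hmatch' : bubbleSet Adj s₂ s₁ =
      {v | ReflTransGen (fun u w => Adj u w ∧ w ≠ s₂) v s₁} := by
    ext v
    constructor
    · intro hv0
      by_cases hvs : v = s₁
      · exact hvs ▸ ReflTransGen.refl
      · have hP := sA v hvs hv0
        have hvU2 : v ∈ bubbleSet Adj s₂ t :=
          hP.monoP (fun a b h => ⟨h.1, h.2.2⟩)
        have hQ : ReflTransGen (fun u w => Adj u w ∧ w ≠ s₂) v t := (m2 v).mp hvU2
        rcases firstHit s₁ hQ with h | h | h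
        · exfalso
          have hP1 : ReflTransGen (fun u w => Adj u w ∧ u ≠ s₁) s₂ v :=
            hP.monoP (fun a b h => ⟨h.1, h.2.1⟩)
          have hP2 := src_to_tgt (x := s₁) hP1 hvs
          exact hnotU1 (hP2.trans (h.monoP (fun a b hh => ⟨hh.1.1, hh.2⟩)))
        · exact absurd h hvs
        · exact h.monoP (fun a b hh => hh.1)
    · intro hR
      have hR : ReflTransGen (fun u w => Adj u w ∧ w ≠ s₂) v s₁ := hR
      have hvU2 : v ∈ bubbleSet Adj s₂ t := (m2 v).mpr (hR.trans hQs₁)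
      have hS : ReflTransGen (fun u w => Adj u w ∧ u ≠ t) s₂ v := hvU2
      by_cases hvs : v = s₁
      · subst hvs
        rcases firstHit v hS with h | h | h
        · exact absurd (tgt_blocked h) (Ne.symm hne)
        · exact absurd h (Ne.symm hne)
        · exact h.monoP (fun a b hh => ⟨hh.1.1, hh.2⟩)
      · rcases suffixFrom s₁ hS with h | h
        · exact (tgt_to_src h (Ne.symm hne)).monoP (fun a b hh => ⟨hh.1.1, hh.2⟩)
        · -- suffix path s₁ → v, combined with v → s₁ gives a cycle in the bubble of (s₂,t)
          exfalso
          have hScl : ∀ u w, u ∈ bubbleSet Adj s₂ t → (Adj u w ∧ u ≠ t) →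
              w ∈ bubbleSet Adj s₂ t := fun u w hu h => ReflTransGen.tail hu h
          have p1 : ReflTransGen (fun u w => Adj u w ∧
              u ∈ bubbleSet Adj s₂ t ∧ w ∈ bubbleSet Adj s₂ t) s₁ v :=
            (rtg_inSet hScl h hmem).monoP (fun a b hh => ⟨hh.1.1, hh.2⟩)
          have p2 : ReflTransGen (fun u w => Adj u w ∧
              u ∈ bubbleSet Adj s₂ t ∧ w ∈ bubbleSet Adj s₂ t) v s₁ := p2' hR
          rcases p1.cases_head with heq | ⟨c, e, hcx⟩
          · exact hvs heq.symm
          · exact hacyc₂ ⟨s₁, hmem, TransGen.head' e (hcx.trans p2)⟩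
  -- assemble SBCore Adj s₂ s₁ and contradict minimality of (s₂, t)
  refine hmin₂ ⟨s₁, hmem, hs₁t, hne, ?_, ?_, hmatch', ?_⟩
  · exact Ne.symm hne
  · exact (hmem : ReflTransGen (fun u w => Adj u w ∧ u ≠ t) s₂ s₁).monoP
      (fun a b h => h.1)
  · rintro ⟨v, hv, hcyc⟩
    exact hacyc₂ ⟨v, sub hv,
      hcyc.monoP (fun a b h => ⟨h.1, sub h.2.1, sub h.2.2⟩)⟩

end SBAux

/-- Any vertex can be the exit of at most one superbubble. -/
theorem exit_unique_entrance {V : Type*} (Adj : V → V → Prop) (s₁ s₂ t : V)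
    (h₁ : IsEntranceExit Adj s₁ t) (h₂ : IsEntranceExit Adj s₂ t) : s₁ = s₂ := by
  by_contra hne
  by_cases hc : s₂ ∈ bubbleSet Adj s₁ t
  · -- then s₁ ∉ bubble of (s₂,t), apply the key lemma with roles swapped
    have hn : s₁ ∉ bubbleSet Adj s₂ t := by
      intro h
      exact SBAux.noSwap Adj s₂ t s₁ h hc hne h₂.1.2.2.2
    exact (SBAux.keyLemma Adj s₂ s₁ t h₂.1 h₁ (Ne.symm hne) hc hn).elim
  · -- then s₁ ∈ bubble of (s₂,t)
    have hs₁t : s₁ ≠ t := h₁.1.1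
    have hmatch₁ := h₁.1.2.2.1
    have hs₂t : s₂ ≠ t := h₂.1.1
    have hreach₂ := h₂.1.2.1
    have m1 : ∀ v, v ∈ bubbleSet Adj s₁ t ↔
        Relation.ReflTransGen (fun u w => Adj u w ∧ w ≠ s₁) v t :=
      fun v => Set.ext_iff.mp hmatch₁ v
    have hmem : s₁ ∈ bubbleSet Adj s₂ t := by
      rcases SBAux.firstHit s₁ hreach₂ with h | h | h
      · exact absurd ((m1 s₂).mpr h) hc
      · exact absurd h.symm hne
      · rcases SBAux.firstHit t h with h2 | h2 | h2
        · have h3 := SBAux.tgt_to_src (x := t) h2 hs₂t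
          exact h3.monoP (fun a b hh => ⟨hh.1.1, hh.2⟩)
        · exact absurd h2 hs₂t
        · exfalso
          have h3 : Relation.ReflTransGen (fun u w => (Adj u w ∧ u ≠ t) ∧ u ≠ s₁) s₂ t :=
            h2.monoP (fun a b hh => ⟨⟨hh.1.1, hh.2⟩, hh.1.2⟩)
          have h4 := SBAux.src_to_tgt (x := s₁) h3 (Ne.symm hs₁t)
          exact hc ((m1 s₂).mpr (h4.monoP (fun a b hh => ⟨hh.1.1, hh.2⟩)))
    exact (SBAux.keyLemma Adj s₁ s₂ t h₁.1 h₂ hne hmem hc).elim
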